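/- Let p be a prime and let ω = (ω₁, …, ω_μ) be a tuple of complex numbers such that each ω_i is a p^n-th root of unity for some n, and no ω_i equals 1. If q ∈ ℤ[t₁^{±1}, …, t_μ^{±1}] is a Laurent polynomial with q(ω₁, …, ω_μ) = 0, then p divides q(1, …, 1); in particular q(1, …, 1) ≠ ±1. -/

import Mathlib

open scoped BigOperators
noncomputable section

/-- The ring of Laurent polynomials in `μ` variables with integer coefficients. -/
abbrev MvLaurent (μ : ℕ) := AddMonoidAlgebra ℤ (Fin μ →₀ ℤ)

/-- The augmentation: evaluation at `(1, …, 1)`. -/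
noncomputable def lAug (μ : ℕ) : MvLaurent μ →+* ℤ :=
  ((AddMonoidAlgebra.lift ℤ ℤ (Fin μ →₀ ℤ)) 1).toRingHom

/-- Evaluation of a Laurent polynomial at a tuple `ω` of complex numbers. -/
noncomputable def lEval {μ : ℕ} (ω : Fin μ → ℂ) (p : MvLaurent μ) : ℂ :=
  p.coeff.sum fun k c => (c : ℂ) * ∏ i, ω i ^ (k i)

lemma zpow_emod_aux {ζ : ℂ} {M : ℕ} (hζ0 : ζ ≠ 0) (hζM : ζ ^ M = 1) (hM : 0 < M) (m : ℤ) :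
    ζ ^ m = ζ ^ ((m % (M : ℤ)).toNat) := by
  have hnn : 0 ≤ m % (M : ℤ) := Int.emod_nonneg m (by exact_mod_cast hM.ne')
  have h1 : ((m % (M : ℤ)).toNat : ℤ) = m % (M : ℤ) := Int.toNat_of_nonneg hnn
  calc ζ ^ m = ζ ^ ((M : ℤ) * (m / (M : ℤ)) + m % (M : ℤ)) := by
        rw [Int.mul_ediv_add_emod]
    _ = (ζ ^ (M : ℤ)) ^ (m / (M : ℤ)) * ζ ^ (m % (M : ℤ)) := by
        rw [zpow_add₀ hζ0, zpow_mul]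
    _ = ζ ^ ((m % (M : ℤ)).toNat) := by
        rw [zpow_natCast, hζM, one_zpow, one_mul, ← zpow_natCast ζ ((m % (M : ℤ)).toNat), h1]

/-- If each coordinate of `ω` is a nontrivial `p^n`-th root of unity (`p` prime) and a
Laurent polynomial `q` vanishes at `ω`, then `p` divides `q(1,…,1)`; in particular
`q(1,…,1) ≠ ±1`. -/
theorem prime_power_roots_not_concordance_root (μ : ℕ) (p : ℕ) (hp : p.Prime)
    (ω : Fin μ → ℂ) (hroot : ∀ i, ∃ n : ℕ, ω i ^ (p ^ n) = 1) (hne : ∀ i, ω i ≠ 1)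
    (q : MvLaurent μ) (hq : lEval ω q = 0) :
    (p : ℤ) ∣ lAug μ q ∧ lAug μ q ≠ 1 ∧ lAug μ q ≠ -1 := by
  classical
  haveI : Fact p.Prime := ⟨hp⟩
  choose n hn using hroot
  set N : ℕ := (∑ i, n i) + 1 with hNdef
  set M : ℕ := p ^ N with hMdef
  have hM0 : 0 < M := pow_pos hp.pos N
  haveI : NeZero M := ⟨hM0.ne'⟩
  obtain ⟨ζ, hζ⟩ : ∃ ζ : ℂ, IsPrimitiveRoot ζ M :=
    ⟨_, Complex.isPrimitiveRoot_exp M hM0.ne'⟩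
  have hζM : ζ ^ M = 1 := hζ.pow_eq_one
  have hζ0 : ζ ≠ 0 := hζ.ne_zero hM0.ne'
  have hωpow : ∀ i, ω i ^ M = 1 := by
    intro i
    have hle : n i ≤ N := le_trans (Finset.single_le_sum (fun j _ => Nat.zero_le (n j))
      (Finset.mem_univ i)) (Nat.le_succ _)
    have h2 : p ^ N = p ^ (n i) * p ^ (N - n i) := by rw [← pow_add, Nat.add_sub_cancel' hle]
    rw [hMdef, h2, pow_mul, hn i, one_pow]
  choose e he1 he using fun i => hζ.eq_pow_of_pow_eq_one (hωpow i)
  set E : (Fin μ →₀ ℤ) → ℕ := fun k => ∑ i, (((e i : ℤ) * k i) % (M : ℤ)).toNat with hEdef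
  have hprod : ∀ k : Fin μ →₀ ℤ, (∏ i, ω i ^ (k i)) = ζ ^ (E k) := by
    intro k
    have : ∀ i : Fin μ, ω i ^ (k i) = ζ ^ ((((e i : ℤ) * k i) % (M : ℤ)).toNat) := by
      intro i
      rw [← he i, ← zpow_natCast ζ (e i), ← zpow_mul, zpow_emod_aux hζ0 hζM hM0]
    rw [Finset.prod_congr rfl (fun i _ => this i), Finset.prod_pow_eq_pow_sum]
  set f : Polynomial ℤ := q.coeff.sum (fun k c => Polynomial.C c * Polynomial.X ^ (E k)) with hfdef
  have hf1 : f.eval 1 = lAug μ q := by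
    rw [hfdef, Finsupp.sum, Polynomial.eval_finset_sum]
    simp only [Polynomial.eval_mul, Polynomial.eval_C, Polynomial.eval_pow, Polynomial.eval_X,
      one_pow, mul_one]
    simp [lAug, AddMonoidAlgebra.lift_apply, Finsupp.sum]
  have hfζ : Polynomial.aeval ζ f = 0 := by
    rw [hfdef, Finsupp.sum, map_sum]
    simp only [map_mul, Polynomial.aeval_C, map_pow, Polynomial.aeval_X, algebraMap_int_eq,
      eq_intCast]
    rw [← hq, lEval, Finsupp.sum]
    exact Finset.sum_congr rfl fun k _ => by rw [hprod k, map_intCast]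
  have hint : IsIntegral ℤ ζ := hζ.isIntegral hM0
  have hdvd : minpoly ℤ ζ ∣ f := minpoly.isIntegrallyClosed_dvd hint hfζ
  rw [← Polynomial.cyclotomic_eq_minpoly hζ hM0] at hdvd
  obtain ⟨g, hg⟩ := hdvd
  have heval : f.eval 1 = (Polynomial.cyclotomic M ℤ).eval 1 * g.eval 1 := by
    rw [hg, Polynomial.eval_mul]
  have hc1 : (Polynomial.cyclotomic M ℤ).eval 1 = p := by
    rw [hMdef, hNdef]
    exact Polynomial.eval_one_cyclotomic_prime_pow _
  have hdvd1 : (p : ℤ) ∣ lAug μ q := ⟨g.eval 1, by rw [← hf1, heval, hc1]⟩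
  refine ⟨hdvd1, ?_, ?_⟩ <;> intro h <;> rw [h] at hdvd1
  · have h2 := hp.two_le
    have := Int.le_of_dvd one_pos hdvd1
    omega
  · rw [dvd_neg] at hdvd1
    have h2 := hp.two_le
    have := Int.le_of_dvd one_pos hdvd1
    omega
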